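/- Let I ⊂ S be an equigenerated monomial ideal (all minimal generators of the same degree d) with linear quotients. Then I has a d-linear resolution. -/

import Mathlib

open MvPolynomial

/-- `I` has a `d`-linear (free) resolution: there is a resolution
`... → S^{r 2} → S^{r 1} → S^{r 0} → I → 0` in which the generators of `S^{r 0}` map to
homogeneous generators of `I` of degree `d` and all matrices have entries which are
homogeneous of degree `1`.  (Its existence is equivalent to all graded Betti numbers
`β_{i,j}(I)` vanishing for `j ≠ i + d`.) -/
def HasLinearResolution {K : Type*} [Field K] {σ : Type*}
    (I : Ideal (MvPolynomial σ K)) (d : ℕ) : Prop :=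
  ∃ (r : ℕ → ℕ) (g : Fin (r 0) → MvPolynomial σ K)
    (M : (i : ℕ) → Fin (r i) → Fin (r (i + 1)) → MvPolynomial σ K),
    (∀ j, (g j).IsHomogeneous d) ∧
    I = Ideal.span (Set.range g) ∧
    (∀ i j k, (M i j k).IsHomogeneous 1) ∧
    (∀ v : Fin (r 0) → MvPolynomial σ K,
      (∑ j, v j * g j) = 0 ↔
        ∃ w : Fin (r 1) → MvPolynomial σ K, v = fun j => ∑ k, M 0 j k * w k) ∧
    (∀ (i : ℕ) (v : Fin (r (i + 1)) → MvPolynomial σ K),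
      ((fun j => ∑ k, M i j k * v k) = fun _ => 0) ↔
        ∃ w : Fin (r (i + 2)) → MvPolynomial σ K, v = fun k => ∑ l, M (i + 1) k l * w l)

section LinearResolutionAux

section Aux
variable {σ : Type*} {K : Type*} [CommRing K]

lemma hcProd (p q : MvPolynomial σ K) (e b : ℕ) (hp : p.IsHomogeneous e) :
    homogeneousComponent (e + b) (p * q) = p * homogeneousComponent b q := by
  conv_lhs => rw [← sum_homogeneousComponent q]
  rw [Finset.mul_sum, map_sum]
  by_cases hb : b ∈ Finset.range (q.totalDegree + 1)
  · rw [Finset.sum_eq_single b]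
    · rw [homogeneousComponent_of_mem
        (hp.mul (homogeneousComponent_isHomogeneous b q)), if_pos rfl]
    · intro i _ hib
      rw [homogeneousComponent_of_mem
        (hp.mul (homogeneousComponent_isHomogeneous i q)), if_neg (by omega)]
    · exact fun h => absurd hb h
  · have hq : homogeneousComponent b q = 0 := by
      apply homogeneousComponent_eq_zero
      simp only [Finset.mem_range, not_lt] at hb; omega
    rw [hq, mul_zero]
    apply Finset.sum_eq_zero
    intro i hi
    rw [homogeneousComponent_of_mem
      (hp.mul (homogeneousComponent_isHomogeneous i q)), if_neg]
    simp only [Finset.mem_range] at hi hb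
    omega

/-- Homogeneous lifting: if a vector with entries homogeneous of degree `e + c` is in the
image of a matrix with entries homogeneous of degree `e`, it is the image of a vector with
entries homogeneous of degree `c`. -/
lemma homogLift {ι ι' : Type*} [Fintype ι'] (M : ι → ι' → MvPolynomial σ K) (e c : ℕ)
    (hM : ∀ j k, (M j k).IsHomogeneous e) (v : ι → MvPolynomial σ K)
    (hv : ∀ j, (v j).IsHomogeneous (e + c)) (w : ι' → MvPolynomial σ K)
    (hw : v = fun j => ∑ k, M j k * w k) :
    ∃ w' : ι' → MvPolynomial σ K, (∀ k, (w' k).IsHomogeneous c) ∧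
      v = fun j => ∑ k, M j k * w' k := by
  refine ⟨fun k => homogeneousComponent c (w k), fun k => homogeneousComponent_isHomogeneous c _,
    funext fun j => ?_⟩
  have h1 : v j = homogeneousComponent (e + c) (v j) := by
    rw [homogeneousComponent_of_mem (hv j), if_pos rfl]
  rw [h1, hw]
  simp only [map_sum]
  exact Finset.sum_congr rfl fun k _ => hcProd _ _ _ _ (hM j k)

end Aux

section Span
variable {σ : Type*} {K : Type*} [CommRing K] [Nontrivial K]

lemma mem_span_X_iff (s : Set σ) (p : MvPolynomial σ K) :
    p ∈ Ideal.span ((fun x => (X x : MvPolynomial σ K)) '' s) ↔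
      ∀ m ∈ p.support, ∃ y ∈ s, m y ≠ 0 := by
  classical
  constructor
  · intro hp
    refine Submodule.span_induction ?_ ?_ ?_ ?_ hp
    · rintro q ⟨y, hy, rfl⟩ m hm
      rw [MvPolynomial.support_X (R := K)] at hm
      simp only [Finset.mem_singleton] at hm
      exact ⟨y, hy, by simp [hm, Finsupp.single_apply]⟩
    · intro m hm; simp at hm
    · intro a b _ _ ha hb m hm
      have := MvPolynomial.support_add (p := a) (q := b) hm
      rw [Finset.mem_union] at this
      rcases this with h | h
      · exact ha m h
      · exact hb m h
    · intro a x _ hx m hm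
      have := MvPolynomial.support_mul a x hm
      rw [Finset.mem_add] at this
      obtain ⟨m1, hm1, m2, hm2, rfl⟩ := this
      obtain ⟨y, hy, hy2⟩ := hx m2 hm2
      exact ⟨y, hy, by simp only [Finsupp.add_apply]; omega⟩
  · intro h
    rw [← MvPolynomial.support_sum_monomial_coeff p]
    apply Ideal.sum_mem
    intro m hm
    obtain ⟨y, hy, hy2⟩ := h m hm
    have key : (monomial m (coeff m p) : MvPolynomial σ K) =
        X y * monomial (m - Finsupp.single y 1) (coeff m p) := by
      have hmeq : Finsupp.single y 1 + (m - Finsupp.single y 1) = m := by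
        ext z
        by_cases hz : y = z
        · subst hz
          simp only [Finsupp.add_apply, Finsupp.tsub_apply, Finsupp.single_eq_same]
          omega
        · simp only [Finsupp.add_apply, Finsupp.tsub_apply, Finsupp.single_apply, if_neg hz]
          omega
      rw [X, monomial_mul, one_mul, hmeq]
    rw [key]
    exact Ideal.mul_mem_right _ _ (Ideal.subset_span ⟨y, hy, rfl⟩)

lemma X_regular_span {s : Set σ} {x : σ} (hx : x ∉ s) {q : MvPolynomial σ K}
    (h : X x * q ∈ Ideal.span ((fun y => (X y : MvPolynomial σ K)) '' s)) :
    q ∈ Ideal.span ((fun y => (X y : MvPolynomial σ K)) '' s) := by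
  rw [mem_span_X_iff] at h ⊢
  intro m hm
  have hm' : (Finsupp.single x 1 + m) ∈ (X x * q).support := by
    rw [support_X_mul]
    exact Finset.mem_map.2 ⟨m, hm, rfl⟩
  obtain ⟨y, hy, hy2⟩ := h _ hm'
  refine ⟨y, hy, ?_⟩
  have hxy : y ≠ x := fun hc => hx (hc ▸ hy)
  simpa [Finsupp.add_apply, Finsupp.single_apply, Ne.symm hxy] using hy2

end Span

/-- A sequence of finite index types together with "matrices" between consecutive free
modules.  `M i j k` is the entry in row `j` (basis of the `i`-th module) and column `k`
(basis of the `(i+1)`-st module). -/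
structure MatCx (R : Type*) [CommRing R] where
  ι : ℕ → Type
  fin : ∀ i, Fintype (ι i)
  dec : ∀ i, DecidableEq (ι i)
  M : (i : ℕ) → ι i → ι (i + 1) → R

attribute [instance] MatCx.fin MatCx.dec

namespace MatCx
variable {R : Type*} [CommRing R] (C : MatCx R)

/-- Application of the `i`-th matrix to a vector. -/
def ap (i : ℕ) (v : C.ι (i + 1) → R) : C.ι i → R := fun j => ∑ k, C.M i j k * v k

lemma ap_add (i : ℕ) (v w : C.ι (i + 1) → R) : C.ap i (v + w) = C.ap i v + C.ap i w := by
  funext j; simp [ap, mul_add, Finset.sum_add_distrib]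

lemma ap_zero (i : ℕ) : C.ap i 0 = 0 := by funext j; simp [ap]

lemma ap_neg (i : ℕ) (v : C.ι (i + 1) → R) : C.ap i (-v) = -C.ap i v := by
  funext j; simp [ap, Finset.sum_neg_distrib]

lemma ap_smul (i : ℕ) (p : R) (v : C.ι (i + 1) → R) : C.ap i (p • v) = p • C.ap i v := by
  funext j
  simp only [ap, Pi.smul_apply, smul_eq_mul, Finset.mul_sum]
  exact Finset.sum_congr rfl fun k _ => by ring

/-- Exactness (including the complex property) at every spot. -/
def Exact : Prop := ∀ (i : ℕ) (v : C.ι (i + 1) → R), C.ap i v = 0 ↔ ∃ w, v = C.ap (i + 1) w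

lemma Exact.ap_ap {C : MatCx R} (hC : C.Exact) (i : ℕ) (w : C.ι (i + 2) → R) :
    C.ap i (C.ap (i + 1) w) = 0 := (hC i _).2 ⟨w, rfl⟩

end MatCx

/-- Entries all homogeneous of degree 1. -/
def MatCx.Homog {σ K : Type*} [CommRing K] (C : MatCx (MvPolynomial σ K)) : Prop :=
  ∀ i j k, (C.M i j k).IsHomogeneous 1

section Koszul
variable {σ K : Type*} [CommRing K]

/-- Mapping cone of multiplication by `X x` on `C` (where we keep the degree-`0` index type:
this is the operation which builds the Koszul complex on `x :: l` from the one on `l`). -/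
def coneI (C : MatCx (MvPolynomial σ K)) : ℕ → Type
  | 0 => C.ι 0
  | i + 1 => C.ι (i + 1) ⊕ C.ι i

instance coneIFin (C : MatCx (MvPolynomial σ K)) : ∀ i, Fintype (coneI C i)
  | 0 => C.fin 0
  | i + 1 =>
    letI := C.fin (i + 1); letI := C.fin i
    inferInstanceAs (Fintype (C.ι (i + 1) ⊕ C.ι i))

instance coneIDec (C : MatCx (MvPolynomial σ K)) : ∀ i, DecidableEq (coneI C i)
  | 0 => C.dec 0
  | i + 1 =>
    letI := C.dec (i + 1); letI := C.dec i
    inferInstanceAs (DecidableEq (C.ι (i + 1) ⊕ C.ι i))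

attribute [reducible] coneI

noncomputable def coneM (x : σ) (C : MatCx (MvPolynomial σ K)) :
    ∀ i, coneI C i → coneI C (i + 1) → MvPolynomial σ K
  | 0 => fun j c =>
    Sum.casesOn c (fun c1 => C.M 0 j c1)
      (fun b => letI := C.dec 0; if j = b then X x else 0)
  | i + 1 => fun j c =>
    Sum.casesOn j
      (fun j1 => Sum.casesOn c (fun c1 => C.M (i + 1) j1 c1)
        (fun b => letI := C.dec (i + 1); if j1 = b then X x else 0))
      (fun j2 => Sum.casesOn c (fun _ => (0 : MvPolynomial σ K))
        (fun b => -C.M i j2 b))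

/-- Mapping cone of multiplication by `X x` on `C` (keeping the degree-`0` index type):
the operation building the Koszul complex on `x :: l` from the one on `l`). -/
noncomputable def cone (x : σ) (C : MatCx (MvPolynomial σ K)) : MatCx (MvPolynomial σ K) where
  ι := coneI C
  fin := coneIFin C
  dec := coneIDec C
  M := coneM x C

attribute [reducible] cone

lemma cone_ap_zero (x : σ) (C : MatCx (MvPolynomial σ K)) (v : (cone x C).ι 1 → MvPolynomial σ K)
    (j : C.ι 0) :
    (cone x C).ap 0 v j = C.ap 0 (v ∘ Sum.inl) j + X x * v (Sum.inr j) := by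
  show (∑ c : C.ι 1 ⊕ C.ι 0, (cone x C).M 0 j c * v c) = _
  rw [Fintype.sum_sum_type]
  simp [cone, coneM, MatCx.ap, Function.comp, ite_mul, Finset.sum_ite_eq]

lemma cone_ap_succ_inl (x : σ) (C : MatCx (MvPolynomial σ K)) (i : ℕ)
    (v : (cone x C).ι (i + 2) → MvPolynomial σ K) (j : C.ι (i + 1)) :
    (cone x C).ap (i + 1) v (Sum.inl j) =
      C.ap (i + 1) (v ∘ Sum.inl) j + X x * v (Sum.inr j) := by
  show (∑ c : C.ι (i + 2) ⊕ C.ι (i + 1), (cone x C).M (i + 1) (Sum.inl j) c * v c) = _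
  rw [Fintype.sum_sum_type]
  simp [cone, coneM, MatCx.ap, Function.comp, ite_mul, Finset.sum_ite_eq]

lemma cone_ap_succ_inr (x : σ) (C : MatCx (MvPolynomial σ K)) (i : ℕ)
    (v : (cone x C).ι (i + 2) → MvPolynomial σ K) (j : C.ι i) :
    (cone x C).ap (i + 1) v (Sum.inr j) = -(C.ap i (v ∘ Sum.inr) j) := by
  show (∑ c : C.ι (i + 2) ⊕ C.ι (i + 1), (cone x C).M (i + 1) (Sum.inr j) c * v c) = _
  rw [Fintype.sum_sum_type]
  simp [cone, coneM, MatCx.ap, Function.comp, Finset.sum_neg_distrib]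

/-- The Koszul complex on a list of variables. -/
noncomputable def KCx : List σ → MatCx (MvPolynomial σ K)
  | [] => { ι := fun i => match i with | 0 => PUnit | _ + 1 => PEmpty
            fin := fun i => match i with
              | 0 => inferInstanceAs (Fintype PUnit)
              | _ + 1 => inferInstanceAs (Fintype PEmpty)
            dec := fun i => match i with
              | 0 => inferInstanceAs (DecidableEq PUnit)
              | _ + 1 => inferInstanceAs (DecidableEq PEmpty)
            M := fun i => match i with
              | 0 => fun _ e => e.elim
              | _ + 1 => fun _ e => e.elim }
    | x :: l => cone x (KCx l)

attribute [reducible] KCx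

end Koszul
section KoszulProps
variable {σ K : Type*} [CommRing K] [Nontrivial K]

lemma KCx_i0_sub : ∀ l : List σ, Subsingleton ((KCx (K := K) l).ι 0)
  | [] => inferInstanceAs (Subsingleton PUnit)
  | _ :: l => KCx_i0_sub l

lemma KCx_i0_ne : ∀ l : List σ, Nonempty ((KCx (K := K) l).ι 0)
  | [] => ⟨PUnit.unit⟩
  | _ :: l => KCx_i0_ne l

lemma kap0 (x : σ) (l : List σ) (v : (KCx (K := K) (x :: l)).ι 1 → MvPolynomial σ K)
    (j : (KCx (K := K) l).ι 0) :
    (KCx (K := K) (x :: l)).ap 0 v j =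
      (KCx (K := K) l).ap 0 (v ∘ Sum.inl) j + X x * v (Sum.inr j) :=
  cone_ap_zero x (KCx l) v j

lemma kapL (x : σ) (l : List σ) (i : ℕ)
    (v : (KCx (K := K) (x :: l)).ι (i + 2) → MvPolynomial σ K) (j : (KCx (K := K) l).ι (i + 1)) :
    (KCx (K := K) (x :: l)).ap (i + 1) v (Sum.inl j) =
      (KCx (K := K) l).ap (i + 1) (v ∘ Sum.inl) j + X x * v (Sum.inr j) :=
  cone_ap_succ_inl x (KCx l) i v j

lemma kapR (x : σ) (l : List σ) (i : ℕ)
    (v : (KCx (K := K) (x :: l)).ι (i + 2) → MvPolynomial σ K) (j : (KCx (K := K) l).ι i) :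
    (KCx (K := K) (x :: l)).ap (i + 1) v (Sum.inr j) =
      -((KCx (K := K) l).ap i (v ∘ Sum.inr) j) :=
  cone_ap_succ_inr x (KCx l) i v j

lemma KCx_homog : ∀ l : List σ, (KCx (K := K) l).Homog := by
  intro l
  induction l with
  | nil =>
    intro i j k
    match i, k with
    | 0, k => exact (k : PEmpty).elim
    | i + 1, k => exact (k : PEmpty).elim
  | cons x l ih =>
    intro i j k
    match i, j, k with
    | 0, j, Sum.inl c => exact ih 0 j c
    | 0, j, Sum.inr b =>
      show ((if j = b then X x else 0 : MvPolynomial σ K)).IsHomogeneous 1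
      split
      · exact isHomogeneous_X _ _
      · exact isHomogeneous_zero _ _ _
    | i + 1, Sum.inl j, Sum.inl c => exact ih (i + 1) j c
    | i + 1, Sum.inl j, Sum.inr b =>
      show ((if j = b then X x else 0 : MvPolynomial σ K)).IsHomogeneous 1
      split
      · exact isHomogeneous_X _ _
      · exact isHomogeneous_zero _ _ _
    | i + 1, Sum.inr j, Sum.inl c => exact isHomogeneous_zero _ _ _
    | i + 1, Sum.inr j, Sum.inr b => exact ((ih i j b).neg)

lemma KCx_bot : ∀ l : List σ, ∀ p : MvPolynomial σ K,
    p ∈ Ideal.span ((fun y => (X y : MvPolynomial σ K)) '' {y | y ∈ l}) ↔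
      ∃ v, (KCx (K := K) l).ap 0 v = fun _ => p := by
  intro l
  induction l with
  | nil =>
    intro p
    constructor
    · intro hp
      have : p = 0 := by simpa using hp
      subst this
      refine ⟨fun e => (e : PEmpty).elim, funext fun j => ?_⟩
      exact Finset.sum_eq_zero fun k _ => (k : PEmpty).elim
    · rintro ⟨v, hv⟩
      have h0 : (KCx (K := K) ([] : List σ)).ap 0 v PUnit.unit = p := congrFun hv _
      have hz : (KCx (K := K) ([] : List σ)).ap 0 v PUnit.unit = 0 :=
        Finset.sum_eq_zero fun k _ => (k : PEmpty).elim
      rw [hz] at h0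
      simp [← h0]
  | cons x l ih =>
    intro p
    have hset : {y : σ | y ∈ x :: l} = insert x {y | y ∈ l} := by
      ext y; simp [List.mem_cons]
    rw [hset, Set.image_insert_eq, Ideal.span_insert]
    haveI := KCx_i0_sub (K := K) l
    obtain ⟨j0⟩ := KCx_i0_ne (K := K) l
    constructor
    · intro hp
      obtain ⟨q1, hq1, q2, hq2, rfl⟩ := Submodule.mem_sup.1 hp
      obtain ⟨c, rfl⟩ := Ideal.mem_span_singleton'.1 hq1
      obtain ⟨v0, hv0⟩ := (ih q2).1 hq2
      refine ⟨(Sum.elim v0 (fun _ => c) : (KCx (K := K) l).ι 1 ⊕ (KCx (K := K) l).ι 0 → MvPolynomial σ K), funext fun j => ?_⟩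
      rw [kap0]
      have e1 : (Sum.elim v0 (fun _ => c) : (KCx (K := K) l).ι 1 ⊕ (KCx (K := K) l).ι 0 → MvPolynomial σ K) ∘ Sum.inl = v0 := rfl
      rw [e1, hv0]
      simp only [Sum.elim_inr]
      ring
    · rintro ⟨v, hv⟩
      have hj : (KCx (K := K) (x :: l)).ap 0 v j0 = p := congrFun hv j0
      rw [kap0] at hj
      have h1 : (KCx (K := K) l).ap 0 (v ∘ Sum.inl) j0 ∈
          Ideal.span ((fun y => (X y : MvPolynomial σ K)) '' {y | y ∈ l}) := by
        apply (ih _).2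
        exact ⟨v ∘ Sum.inl, funext fun j' => by rw [Subsingleton.elim j' j0]⟩
      rw [← hj]
      refine Submodule.mem_sup.2 ⟨X x * v (Sum.inr j0),
        Ideal.mem_span_singleton'.2 ⟨v (Sum.inr j0), mul_comm _ _⟩, _, h1, by ring⟩

lemma KCx_exact : ∀ l : List σ, l.Nodup → (KCx (K := K) l).Exact := by
  intro l
  induction l with
  | nil =>
    intro _ i v
    constructor
    · intro _
      exact ⟨fun e => (e : PEmpty).elim, funext fun e => (e : PEmpty).elim⟩
    · intro _
      funext j
      exact Finset.sum_eq_zero fun k _ => (k : PEmpty).elim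
  | cons x l ih =>
    intro hnd
    have hx : x ∉ l := (List.nodup_cons.1 hnd).1
    have hnd' : l.Nodup := (List.nodup_cons.1 hnd).2
    have IH := ih hnd'
    haveI := KCx_i0_sub (K := K) l
    obtain ⟨j0⟩ := KCx_i0_ne (K := K) l
    intro i v
    match i with
    | 0 =>
      constructor
      · intro hv
        set q := v (Sum.inr j0) with hq
        have hcomp : ∀ j, (KCx (K := K) l).ap 0 (v ∘ Sum.inl) j + X x * v (Sum.inr j) = 0 := by
          intro j
          rw [← kap0]
          exact congrFun hv j
        have hmem : X x * q ∈
            Ideal.span ((fun y => (X y : MvPolynomial σ K)) '' {y | y ∈ l}) := by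
          have h1 : X x * q = -((KCx (K := K) l).ap 0 (v ∘ Sum.inl) j0) := by
            have h2 := hcomp j0
            rw [← hq] at h2
            linear_combination h2
          rw [h1]
          apply Submodule.neg_mem
          apply (KCx_bot l _).2
          exact ⟨v ∘ Sum.inl, funext fun j' => by rw [Subsingleton.elim j' j0]⟩
        have hq2 : q ∈ Ideal.span ((fun y => (X y : MvPolynomial σ K)) '' {y | y ∈ l}) :=
          X_regular_span (by simpa using hx) hmem
        obtain ⟨c, hc⟩ := (KCx_bot l _).1 hq2
        have ha' : (KCx (K := K) l).ap 0
            ((v ∘ Sum.inl) + (X x : MvPolynomial σ K) • c) = 0 := by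
          rw [MatCx.ap_add, MatCx.ap_smul]
          funext j
          have h1 : (KCx (K := K) l).ap 0 c j = q := congrFun hc j
          simp only [Pi.add_apply, Pi.smul_apply, smul_eq_mul, h1, Pi.zero_apply]
          have h2 : v (Sum.inr j) = q := by rw [Subsingleton.elim j j0, ← hq]
          rw [← h2]
          exact hcomp j
        obtain ⟨w1, hw1⟩ := (IH 0 _).1 ha'
        refine ⟨(Sum.elim w1 (-c) : (KCx (K := K) l).ι 2 ⊕ (KCx (K := K) l).ι 1 → MvPolynomial σ K), funext fun j => ?_⟩
        match j with
        | Sum.inl j =>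
          rw [kapL]
          have e1 : (Sum.elim w1 (-c) : (KCx (K := K) l).ι 2 ⊕ (KCx (K := K) l).ι 1 → MvPolynomial σ K) ∘ Sum.inl = w1 := rfl
          rw [e1, ← hw1]
          simp only [Sum.elim_inr, Pi.neg_apply, Pi.add_apply, Pi.smul_apply, smul_eq_mul,
            Function.comp_apply]
          ring
        | Sum.inr j =>
          rw [kapR]
          have e1 : (Sum.elim w1 (-c) : (KCx (K := K) l).ι 2 ⊕ (KCx (K := K) l).ι 1 → MvPolynomial σ K) ∘ Sum.inr = -c := rfl
          rw [e1, MatCx.ap_neg]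
          have h1 : (KCx (K := K) l).ap 0 c j = q := congrFun hc j
          simp only [Pi.neg_apply, h1, neg_neg]
          rw [Subsingleton.elim j j0, ← hq]
      · rintro ⟨w, rfl⟩
        funext j
        rw [kap0, kapR]
        have e1 : ((KCx (K := K) (x :: l)).ap 1 w) ∘ Sum.inl = fun j =>
            (KCx (K := K) l).ap 1 (w ∘ Sum.inl) j + X x * w (Sum.inr j) := by
          funext j'; exact kapL x l 0 w j'
        rw [e1]
        have e3 : (fun j => (KCx (K := K) l).ap 1 (w ∘ Sum.inl) j + X x * w (Sum.inr j)) =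
            ((KCx (K := K) l).ap 1 (w ∘ Sum.inl)) + (X x : MvPolynomial σ K) • (w ∘ Sum.inr) :=
          rfl
        rw [e3, MatCx.ap_add, MatCx.ap_smul, IH.ap_ap]
        simp
    | i + 1 =>
      constructor
      · intro hv
        have hinr : (KCx (K := K) l).ap i (v ∘ Sum.inr) = 0 := by
          funext j
          have h2 := congrFun hv (Sum.inr j)
          rw [kapR] at h2
          have h3 : -((KCx (K := K) l).ap i (v ∘ Sum.inr) j) = 0 := by simpa using h2
          simpa using neg_eq_zero.1 h3
        obtain ⟨b', hb'⟩ := (IH i _).1 hinr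
        have hinl : (KCx (K := K) l).ap (i + 1)
            ((v ∘ Sum.inl) + (X x : MvPolynomial σ K) • b') = 0 := by
          rw [MatCx.ap_add, MatCx.ap_smul]
          funext j
          have h2 : (KCx (K := K) l).ap (i + 1) b' j = v (Sum.inr j) := (congrFun hb' j).symm
          simp only [Pi.add_apply, Pi.smul_apply, smul_eq_mul, h2, Pi.zero_apply]
          have h4 := congrFun hv (Sum.inl j)
          rw [kapL] at h4
          exact h4
        obtain ⟨a', ha'⟩ := (IH (i + 1) _).1 hinl
        refine ⟨(Sum.elim a' (-b') : (KCx (K := K) l).ι (i + 3) ⊕ (KCx (K := K) l).ι (i + 2) → MvPolynomial σ K), funext fun j => ?_⟩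
        match j with
        | Sum.inl j =>
          rw [kapL]
          have e1 : (Sum.elim a' (-b') : (KCx (K := K) l).ι (i + 3) ⊕ (KCx (K := K) l).ι (i + 2) → MvPolynomial σ K) ∘ Sum.inl = a' := rfl
          rw [e1, ← ha']
          simp only [Sum.elim_inr, Pi.neg_apply, Pi.add_apply, Pi.smul_apply, smul_eq_mul,
            Function.comp_apply]
          ring
        | Sum.inr j =>
          rw [kapR]
          have e1 : (Sum.elim a' (-b') : (KCx (K := K) l).ι (i + 3) ⊕ (KCx (K := K) l).ι (i + 2) → MvPolynomial σ K) ∘ Sum.inr = -b' := rfl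
          rw [e1, MatCx.ap_neg]
          simp only [Pi.neg_apply, neg_neg]
          simpa [Function.comp] using congrFun hb' j
      · rintro ⟨w, rfl⟩
        funext j
        match j with
        | Sum.inl j =>
          rw [kapL]
          have e1 : ((KCx (K := K) (x :: l)).ap (i + 2) w) ∘ Sum.inl = fun j =>
              (KCx (K := K) l).ap (i + 2) (w ∘ Sum.inl) j + X x * w (Sum.inr j) := by
            funext j'; exact kapL x l (i + 1) w j'
          have e2 : ((KCx (K := K) (x :: l)).ap (i + 2) w) (Sum.inr j) =
              -((KCx (K := K) l).ap (i + 1) (w ∘ Sum.inr) j) := kapR x l (i + 1) w j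
          rw [e1, e2]
          have e3 : (fun j => (KCx (K := K) l).ap (i + 2) (w ∘ Sum.inl) j + X x * w (Sum.inr j)) =
              ((KCx (K := K) l).ap (i + 2) (w ∘ Sum.inl))
                + (X x : MvPolynomial σ K) • (w ∘ Sum.inr) := rfl
          rw [e3, MatCx.ap_add, MatCx.ap_smul, IH.ap_ap]
          simp
        | Sum.inr j =>
          rw [kapR]
          have e1 : ((KCx (K := K) (x :: l)).ap (i + 2) w) ∘ Sum.inr =
              -((KCx (K := K) l).ap (i + 1) (w ∘ Sum.inr)) := by
            funext j'; exact kapR x l (i + 1) w j'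
          rw [e1, MatCx.ap_neg, IH.ap_ap]
          simp

end KoszulProps
section GCone
variable {R : Type*} [CommRing R]

/-- Apply a "matrix" whose columns are indexed by `α` to a vector. -/
def apM {α β : Type*} [Fintype α] (P : α → β → R) (v : α → R) : β → R :=
  fun j => ∑ b, P b j * v b

lemma apM_neg {α β : Type*} [Fintype α] (P : α → β → R) (v : α → R) :
    apM P (-v) = -apM P v := by
  funext j; simp [apM, Finset.sum_neg_distrib]

lemma apM_zero {α β : Type*} [Fintype α] (P : α → β → R) : apM P 0 = 0 := by
  funext j; simp [apM]

lemma MatCx.ap_single (C : MatCx R) (i : ℕ) (k0 : C.ι (i + 1)) (j : C.ι i) :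
    C.ap i (fun k => if k = k0 then 1 else 0) j = C.M i j k0 := by
  simp [MatCx.ap, mul_ite, mul_one, mul_zero, Finset.sum_ite_eq']

lemma ap_apM (C : MatCx R) (i : ℕ) {α : Type*} [Fintype α]
    (P : α → C.ι (i + 1) → R) (v : α → R) :
    C.ap i (apM P v) = apM (fun b => C.ap i (P b)) v := by
  funext j
  simp only [MatCx.ap, apM, Finset.mul_sum, Finset.sum_mul]
  rw [Finset.sum_comm]
  exact Finset.sum_congr rfl fun b _ => Finset.sum_congr rfl fun k _ => by ring

lemma apM_ap (C : MatCx R) (i : ℕ) {β : Type*} (P : C.ι (i + 1) → β → R)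
    (v : C.ι (i + 2) → R) :
    apM P (C.ap (i + 1) v) = apM (fun c => apM P (fun b => C.M (i + 1) b c)) v := by
  funext j
  simp only [MatCx.ap, apM, Finset.mul_sum, Finset.sum_mul]
  rw [Finset.sum_comm]
  exact Finset.sum_congr rfl fun b _ => Finset.sum_congr rfl fun k _ => by ring

/-- The mapping cone of a chain map `Ψ` from a complex `Kz` (shifted) to `F`. -/
def gcone (F Kz : MatCx R) (Ψ : ∀ i, Kz.ι (i + 1) → F.ι i → R) : MatCx R where
  ι := fun i => F.ι i ⊕ Kz.ι i
  fin := fun i => letI := F.fin i; letI := Kz.fin i; inferInstanceAs (Fintype (F.ι i ⊕ Kz.ι i))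
  dec := fun i =>
    letI := F.dec i; letI := Kz.dec i; inferInstanceAs (DecidableEq (F.ι i ⊕ Kz.ι i))
  M := fun i j c =>
    Sum.casesOn j
      (fun j1 => Sum.casesOn c (fun k => F.M i j1 k) (fun b => Ψ i b j1))
        (fun j2 => Sum.casesOn c (fun _ => (0 : R)) (fun b => -Kz.M i j2 b))

attribute [reducible] gcone

lemma gcone_ap_inl (F Kz : MatCx R) (Ψ : ∀ i, Kz.ι (i + 1) → F.ι i → R) (i : ℕ)
    (v : (gcone F Kz Ψ).ι (i + 1) → R) (j : F.ι i) :
    (gcone F Kz Ψ).ap i v (Sum.inl j) =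
      F.ap i (v ∘ Sum.inl) j + apM (Ψ i) (v ∘ Sum.inr) j := by
  show (∑ c : F.ι (i + 1) ⊕ Kz.ι (i + 1), (gcone F Kz Ψ).M i (Sum.inl j) c * v c) = _
  rw [Fintype.sum_sum_type]
  simp [gcone, MatCx.ap, apM, Function.comp]

lemma gcone_ap_inr (F Kz : MatCx R) (Ψ : ∀ i, Kz.ι (i + 1) → F.ι i → R) (i : ℕ)
    (v : (gcone F Kz Ψ).ι (i + 1) → R) (j : Kz.ι i) :
    (gcone F Kz Ψ).ap i v (Sum.inr j) = -(Kz.ap i (v ∘ Sum.inr) j) := by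
  show (∑ c : F.ι (i + 1) ⊕ Kz.ι (i + 1), (gcone F Kz Ψ).M i (Sum.inr j) c * v c) = _
  rw [Fintype.sum_sum_type]
  simp [gcone, MatCx.ap, Function.comp, Finset.sum_neg_distrib]

end GCone
section Step
variable {σ K : Type*} [CommRing K] [Nontrivial K]

theorem coneStep (F : MatCx (MvPolynomial σ K)) (g : F.ι 0 → MvPolynomial σ K) (d : ℕ)
    (hg : ∀ j, (g j).IsHomogeneous d)
    (hFhom : F.Homog)
    (hFe0 : ∀ v : F.ι 0 → MvPolynomial σ K,
      (∑ j, v j * g j) = 0 ↔ ∃ w, v = F.ap 0 w)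
    (hFex : F.Exact)
    (mon : MvPolynomial σ K) (hmon : mon.IsHomogeneous d)
    (l : List σ) (hnd : l.Nodup)
    (hc1 : ∀ q, q * mon ∈ Ideal.span (Set.range g) →
      q ∈ Ideal.span ((fun y => (X y : MvPolynomial σ K)) '' {y | y ∈ l}))
    (hc2 : ∀ q, q ∈ Ideal.span ((fun y => (X y : MvPolynomial σ K)) '' {y | y ∈ l}) →
      q * mon ∈ Ideal.span (Set.range g)) :
    ∃ (G : MatCx (MvPolynomial σ K)) (g' : G.ι 0 → MvPolynomial σ K),
      (∀ j, g' j = mon ∨ ∃ j', g' j = g j') ∧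
      Ideal.span (Set.range g') = Ideal.span (Set.range g) ⊔ Ideal.span {mon} ∧
      G.Homog ∧
      (∀ v : G.ι 0 → MvPolynomial σ K, (∑ j, v j * g' j) = 0 ↔ ∃ w, v = G.ap 0 w) ∧
      G.Exact := by
  classical
  haveI hsub := KCx_i0_sub (K := K) l
  obtain ⟨j0⟩ := KCx_i0_ne (K := K) l
  haveI hne : Nonempty ((KCx (K := K) l).ι 0) := ⟨j0⟩
  have κhom := KCx_homog (K := K) l
  have κex := KCx_exact (K := K) l hnd
  -- Step 1 : the chain map in degree 0, column by column
  have key0 : ∀ b : (KCx (K := K) l).ι 1, ∃ col : F.ι 0 → MvPolynomial σ K,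
      (∀ j, (col j).IsHomogeneous 1) ∧
      (∑ j, col j * g j) = (KCx (K := K) l).M 0 j0 b * mon := by
    intro b
    set p := (KCx (K := K) l).M 0 j0 b with hp
    have hp1 : p.IsHomogeneous 1 := κhom 0 j0 b
    have hpmem : p ∈ Ideal.span ((fun y => (X y : MvPolynomial σ K)) '' {y | y ∈ l}) := by
      apply (KCx_bot l p).2
      refine ⟨fun k => if k = b then 1 else 0, funext fun j0' => ?_⟩
      rw [MatCx.ap_single, Subsingleton.elim j0' j0]
    have hpm : p * mon ∈ Ideal.span (Set.range g) := hc2 _ hpmem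
    obtain ⟨c, hc⟩ := (Submodule.mem_span_range_iff_exists_fun _).1 hpm
    have hc' : (fun _ : PUnit.{1} => p * mon) = fun _ => ∑ k, g k * c k := by
      funext _
      rw [← hc]
      exact Finset.sum_congr rfl fun k _ => by rw [smul_eq_mul]; ring
    have hvhom : ∀ _ : PUnit.{1}, (p * mon).IsHomogeneous (d + 1) := by
      intro _
      rw [mul_comm p mon]
      exact hmon.mul hp1
    obtain ⟨w', hw'h, hw'⟩ := homogLift (fun (_ : PUnit.{1}) k => g k) d 1
      (fun _ k => hg k) (fun _ => p * mon) hvhom c hc'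
    refine ⟨w', hw'h, ?_⟩
    have h2 : p * mon = ∑ k, g k * w' k := congrFun hw' PUnit.unit.{1}
    calc (∑ j, w' j * g j) = ∑ k, g k * w' k :=
          Finset.sum_congr rfl fun k _ => mul_comm _ _
      _ = p * mon := h2.symm
  choose Ψ0 hΨ0hom hΨ0spec using key0
  -- vector form of the degree-0 chain map property
  have spec0 : ∀ (v : (KCx (K := K) l).ι 1 → MvPolynomial σ K) (j0' : (KCx (K := K) l).ι 0),
      (∑ j, apM Ψ0 v j * g j) = (KCx (K := K) l).ap 0 v j0' * mon := by
    intro v j0'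
    have e1 : (KCx (K := K) l).ap 0 v j0' = ∑ b, (KCx (K := K) l).M 0 j0 b * v b := by
      rw [Subsingleton.elim j0' j0]; rfl
    rw [e1, Finset.sum_mul]
    simp only [apM, Finset.sum_mul]
    rw [Finset.sum_comm]
    refine Finset.sum_congr rfl fun b _ => ?_
    calc (∑ j, Ψ0 b j * v b * g j) = (∑ j, Ψ0 b j * g j) * v b := by
          rw [Finset.sum_mul]; exact Finset.sum_congr rfl fun j _ => by ring
      _ = (KCx (K := K) l).M 0 j0 b * mon * v b := by rw [hΨ0spec b]
      _ = (KCx (K := K) l).M 0 j0 b * v b * mon := by ring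
  -- the invariant for the inductive construction of the chain map
  have hKK0 : ∀ v, (KCx (K := K) l).ap 0 v = 0 → ∃ w, apM Ψ0 v = F.ap 0 w := by
    intro v hv
    apply (hFe0 _).1
    have h0 : (KCx (K := K) l).ap 0 v j0 = 0 := by rw [hv]; rfl
    rw [spec0 v j0, h0, zero_mul]
  have next : ∀ (i : ℕ) (p : (KCx (K := K) l).ι (i + 1) → F.ι i → MvPolynomial σ K),
      (∀ b j, (p b j).IsHomogeneous 1) →
      (∀ v, (KCx (K := K) l).ap i v = 0 → ∃ w, apM p v = F.ap i w) →
      ∃ p' : (KCx (K := K) l).ι (i + 2) → F.ι (i + 1) → MvPolynomial σ K,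
        (∀ b j, (p' b j).IsHomogeneous 1) ∧
        (∀ v, F.ap i (apM p' v) = apM p ((KCx (K := K) l).ap (i + 1) v)) ∧
        (∀ v, (KCx (K := K) l).ap (i + 1) v = 0 → ∃ w, apM p' v = F.ap (i + 1) w) := by
    intro i p phom pKK
    have col : ∀ c : (KCx (K := K) l).ι (i + 2), ∃ q : F.ι (i + 1) → MvPolynomial σ K,
        (∀ k, (q k).IsHomogeneous 1) ∧
        F.ap i q = apM p (fun b => (KCx (K := K) l).M (i + 1) b c) := by
      intro c
      have hcol : (fun b => (KCx (K := K) l).M (i + 1) b c) =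
          (KCx (K := K) l).ap (i + 1) (fun k => if k = c then 1 else 0) := by
        funext b; rw [MatCx.ap_single]
      have hv0 : (KCx (K := K) l).ap i (fun b => (KCx (K := K) l).M (i + 1) b c) = 0 := by
        rw [hcol]; exact κex.ap_ap i _
      obtain ⟨w, hw⟩ := pKK _ hv0
      have hvhom : ∀ j, ((apM p (fun b => (KCx (K := K) l).M (i + 1) b c)) j).IsHomogeneous 2 := by
        intro j
        apply IsHomogeneous.sum
        intro b _
        exact (phom b j).mul (κhom (i + 1) b c)
      obtain ⟨w', hw'h, hw'⟩ := homogLift (fun j k => F.M i j k) 1 1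
        (fun j k => hFhom i j k) _ hvhom w hw
      exact ⟨w', hw'h, funext fun j => (congrFun hw' j).symm⟩
    choose q hqhom hq using col
    have hrel : ∀ v, F.ap i (apM q v) = apM p ((KCx (K := K) l).ap (i + 1) v) := by
      intro v
      rw [ap_apM, apM_ap]
      exact congrArg (fun P => apM P v) (funext fun c => hq c)
    refine ⟨q, hqhom, hrel, ?_⟩
    intro v hv
    apply (hFex i _).1
    rw [hrel, hv, apM_zero]
  -- build the whole chain map by recursion, using choice
  let T : ℕ → Type _ := fun i =>
    {p : (KCx (K := K) l).ι (i + 1) → F.ι i → MvPolynomial σ K //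
      (∀ b j, (p b j).IsHomogeneous 1) ∧
      (∀ v, (KCx (K := K) l).ap i v = 0 → ∃ w, apM p v = F.ap i w)}
  have nextT : ∀ (i : ℕ) (p : T i), ∃ p' : T (i + 1),
      ∀ v, F.ap i (apM p'.1 v) = apM p.1 ((KCx (K := K) l).ap (i + 1) v) := by
    intro i p
    obtain ⟨p', h1, h2, h3⟩ := next i p.1 p.2.1 p.2.2
    exact ⟨⟨p', h1, h3⟩, h2⟩
  choose nf nrel using nextT
  let chain : ∀ i, T i := fun i => Nat.rec ⟨Ψ0, hΨ0hom, hKK0⟩ (fun i c => nf i c) i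
  let Ψ : ∀ i, (KCx (K := K) l).ι (i + 1) → F.ι i → MvPolynomial σ K := fun i => (chain i).1
  have Ψhom : ∀ i b j, (Ψ i b j).IsHomogeneous 1 := fun i => (chain i).2.1
  have hrel : ∀ i v, F.ap i (apM (Ψ (i + 1)) v) = apM (Ψ i) ((KCx (K := K) l).ap (i + 1) v) :=
    fun i => nrel i (chain i)
  have spec0' : ∀ (v : (KCx (K := K) l).ι 1 → MvPolynomial σ K) (j0' : (KCx (K := K) l).ι 0),
      (∑ j, apM (Ψ 0) v j * g j) = (KCx (K := K) l).ap 0 v j0' * mon := spec0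
  -- the new complex
  refine ⟨gcone F (KCx (K := K) l) Ψ, Sum.elim g (fun _ => mon), ?_, ?_, ?_, ?_, ?_⟩
  · intro j
    match j with
    | Sum.inl j1 => exact Or.inr ⟨j1, rfl⟩
    | Sum.inr j2 => exact Or.inl rfl
  · rw [Set.Sum.elim_range, Set.range_const, Ideal.span_union]
  · intro i j c
    match j, c with
    | Sum.inl j1, Sum.inl k => exact hFhom i j1 k
    | Sum.inl j1, Sum.inr b => exact Ψhom i b j1
    | Sum.inr j2, Sum.inl k => exact isHomogeneous_zero _ _ _
    | Sum.inr j2, Sum.inr b => exact (κhom i j2 b).neg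
  · -- the bottom exactness
    have hsum : ∀ v : (gcone F (KCx (K := K) l) Ψ).ι 0 → MvPolynomial σ K,
        (∑ j, v j * Sum.elim g (fun _ => mon) j) =
          (∑ j, v (Sum.inl j) * g j) + v (Sum.inr j0) * mon := by
      intro v
      show (∑ j : F.ι 0 ⊕ (KCx (K := K) l).ι 0, v j * Sum.elim g (fun _ => mon) j) = _
      rw [Fintype.sum_sum_type]
      congr 1
      exact Fintype.sum_subsingleton _ j0
    intro v
    rw [hsum]
    constructor
    · intro hv
      have hcm : v (Sum.inr j0) * mon ∈ Ideal.span (Set.range g) := by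
        have h1 : v (Sum.inr j0) * mon = -(∑ j, v (Sum.inl j) * g j) := by
          linear_combination hv
        rw [h1]
        apply Submodule.neg_mem
        exact Ideal.sum_mem _ fun j _ =>
          Ideal.mul_mem_left _ _ (Ideal.subset_span ⟨j, rfl⟩)
      obtain ⟨vb, hvb⟩ := (KCx_bot l _).1 (hc1 _ hcm)
      have hsyz : (∑ j, ((v ∘ Sum.inl) - apM (Ψ 0) (-vb)) j * g j) = 0 := by
        simp only [Pi.sub_apply, sub_mul, Finset.sum_sub_distrib, Function.comp_apply]
        rw [spec0' (-vb) j0, MatCx.ap_neg]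
        have h2 : (KCx (K := K) l).ap 0 vb j0 = v (Sum.inr j0) := congrFun hvb j0
        simp only [Pi.neg_apply, h2]
        linear_combination hv
      obtain ⟨w1, hw1⟩ := (hFe0 _).1 hsyz
      refine ⟨(Sum.elim w1 (-vb) :
        F.ι 1 ⊕ (KCx (K := K) l).ι 1 → MvPolynomial σ K), funext fun j => ?_⟩
      match j with
      | Sum.inl j =>
        rw [gcone_ap_inl]
        have e1 : (Sum.elim w1 (-vb) :
            F.ι 1 ⊕ (KCx (K := K) l).ι 1 → MvPolynomial σ K) ∘ Sum.inl = w1 := rfl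
        have e2 : (Sum.elim w1 (-vb) :
            F.ι 1 ⊕ (KCx (K := K) l).ι 1 → MvPolynomial σ K) ∘ Sum.inr = -vb := rfl
        rw [e1, e2, ← hw1]
        simp only [Pi.sub_apply, Function.comp_apply]
        ring
      | Sum.inr j2 =>
        rw [gcone_ap_inr]
        have e2 : (Sum.elim w1 (-vb) :
            F.ι 1 ⊕ (KCx (K := K) l).ι 1 → MvPolynomial σ K) ∘ Sum.inr = -vb := rfl
        rw [e2, MatCx.ap_neg]
        have h2 : (KCx (K := K) l).ap 0 vb j2 = v (Sum.inr j0) := by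
          rw [Subsingleton.elim j2 j0] at *
          exact congrFun hvb j0
        simp only [Pi.neg_apply, neg_neg, h2]
        rw [Subsingleton.elim j2 j0]
    · rintro ⟨w, rfl⟩
      have e1 : ∀ j, ((gcone F (KCx (K := K) l) Ψ).ap 0 w) (Sum.inl j) =
          F.ap 0 (w ∘ Sum.inl) j + apM (Ψ 0) (w ∘ Sum.inr) j := fun j => gcone_ap_inl _ _ _ _ _ _
      have e2 : ((gcone F (KCx (K := K) l) Ψ).ap 0 w) (Sum.inr j0) =
          -((KCx (K := K) l).ap 0 (w ∘ Sum.inr) j0) := gcone_ap_inr _ _ _ _ _ _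
      simp only [e1, e2, add_mul, Finset.sum_add_distrib]
      have e3 : (∑ j, F.ap 0 (w ∘ Sum.inl) j * g j) = 0 := (hFe0 _).2 ⟨w ∘ Sum.inl, rfl⟩
      rw [e3, spec0' (w ∘ Sum.inr) j0]
      ring
  · -- exactness in positive degrees
    intro i v
    constructor
    · intro hv
      have hvr : (KCx (K := K) l).ap i (v ∘ Sum.inr) = 0 := by
        funext j2
        have h2 := congrFun hv (Sum.inr j2)
        rw [gcone_ap_inr] at h2
        have h3 : -((KCx (K := K) l).ap i (v ∘ Sum.inr) j2) = 0 := by simpa using h2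
        simpa using neg_eq_zero.1 h3
      obtain ⟨b', hb'⟩ := (κex i _).1 hvr
      have hsyz : F.ap i ((v ∘ Sum.inl) + apM (Ψ (i + 1)) b') = 0 := by
        rw [MatCx.ap_add, hrel i b', ← hb']
        funext j
        have h2 := congrFun hv (Sum.inl j)
        rw [gcone_ap_inl] at h2
        simpa using h2
      obtain ⟨w1, hw1⟩ := (hFex i _).1 hsyz
      refine ⟨(Sum.elim w1 (-b') :
        F.ι (i + 2) ⊕ (KCx (K := K) l).ι (i + 2) → MvPolynomial σ K), funext fun j => ?_⟩
      match j with
      | Sum.inl j =>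
        rw [gcone_ap_inl]
        have e1 : (Sum.elim w1 (-b') :
            F.ι (i + 2) ⊕ (KCx (K := K) l).ι (i + 2) → MvPolynomial σ K) ∘ Sum.inl = w1 := rfl
        have e2 : (Sum.elim w1 (-b') :
            F.ι (i + 2) ⊕ (KCx (K := K) l).ι (i + 2) → MvPolynomial σ K) ∘ Sum.inr = -b' := rfl
        rw [e1, e2, ← hw1, apM_neg]
        simp only [Pi.add_apply, Pi.neg_apply, Function.comp_apply]
        ring
      | Sum.inr j2 =>
        rw [gcone_ap_inr]
        have e2 : (Sum.elim w1 (-b') :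
            F.ι (i + 2) ⊕ (KCx (K := K) l).ι (i + 2) → MvPolynomial σ K) ∘ Sum.inr = -b' := rfl
        rw [e2, MatCx.ap_neg]
        simp only [Pi.neg_apply, neg_neg]
        simpa [Function.comp] using congrFun hb' j2
    · rintro ⟨w, rfl⟩
      funext j
      have einl : ((gcone F (KCx (K := K) l) Ψ).ap (i + 1) w) ∘ Sum.inl =
          F.ap (i + 1) (w ∘ Sum.inl) + apM (Ψ (i + 1)) (w ∘ Sum.inr) := by
        funext j'; exact gcone_ap_inl _ _ _ _ _ _
      have einr : ((gcone F (KCx (K := K) l) Ψ).ap (i + 1) w) ∘ Sum.inr =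
          -((KCx (K := K) l).ap (i + 1) (w ∘ Sum.inr)) := by
        funext j'; exact gcone_ap_inr _ _ _ _ _ _
      match j with
      | Sum.inl j =>
        rw [gcone_ap_inl, einl, einr, MatCx.ap_add, apM_neg, hrel i (w ∘ Sum.inr),
          hFex.ap_ap]
        simp
      | Sum.inr j2 =>
        rw [gcone_ap_inr, einr, MatCx.ap_neg, κex.ap_ap]
        simp

end Step
section Main

/-- The zero complex. -/
def trivCx (R : Type*) [CommRing R] : MatCx R where
  ι := fun _ => PEmpty
  fin := fun _ => inferInstanceAs (Fintype PEmpty)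
  dec := fun _ => inferInstanceAs (DecidableEq PEmpty)
  M := fun _ j _ => j.elim

variable {K : Type*} [Field K] {n m : ℕ}

lemma transport_iff {R : Type*} [CommRing R] (F : MatCx R) (i : ℕ) {a b : ℕ}
    (ea : F.ι i ≃ Fin a) (eb : F.ι (i + 1) ≃ Fin b) (v : Fin a → R) :
    (∃ w', (fun j' => v (ea j')) = F.ap i w') ↔
      ∃ w : Fin b → R, v = fun j => ∑ k, F.M i (ea.symm j) (eb.symm k) * w k := by
  constructor
  · rintro ⟨w', hw'⟩
    refine ⟨w' ∘ eb.symm, funext fun j => ?_⟩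
    have h1 : v j = F.ap i w' (ea.symm j) := by
      have h2 := congrFun hw' (ea.symm j)
      simpa [Equiv.apply_symm_apply] using h2
    rw [h1]
    show F.ap i w' (ea.symm j) = ∑ k, F.M i (ea.symm j) (eb.symm k) * (w' ∘ eb.symm) k
    rw [MatCx.ap]
    exact Fintype.sum_equiv eb _ _ (fun k' => by
      simp [Equiv.symm_apply_apply, Function.comp])
  · rintro ⟨w, hw⟩
    refine ⟨w ∘ eb, funext fun j' => ?_⟩
    have h1 := congrFun hw (ea j')
    rw [h1]
    show (∑ k, F.M i (ea.symm (ea j')) (eb.symm k) * w k) = ∑ k', F.M i j' k' * (w ∘ eb) k'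
    rw [Equiv.symm_apply_apply]
    exact Fintype.sum_equiv eb.symm _ _ (fun k => by simp [Function.comp])

theorem mainInduction (d : ℕ) (u : Fin m → (Fin n →₀ ℕ))
    (hd : ∀ i, (u i).sum (fun _ e => e) = d)
    (hlq : ∀ i : Fin m, ∃ s : Set (Fin n),
      Submodule.colon
          (Ideal.span ((fun j => (monomial (u j) (1 : K) : MvPolynomial (Fin n) K)) ''
            {j : Fin m | j < i}))
          (Ideal.span {(monomial (u i) (1 : K) : MvPolynomial (Fin n) K)})
        = Ideal.span ((fun x => (X x : MvPolynomial (Fin n) K)) '' s)) :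
    ∀ k : ℕ, k ≤ m →
    ∃ (F : MatCx (MvPolynomial (Fin n) K)) (g : F.ι 0 → MvPolynomial (Fin n) K),
      (∀ j, ∃ a : Fin m, a.val < k ∧ g j = monomial (u a) 1) ∧
      Ideal.span (Set.range g) =
        Ideal.span ((fun j => (monomial (u j) (1 : K) : MvPolynomial (Fin n) K)) ''
          {j : Fin m | j.val < k}) ∧
      F.Homog ∧
      (∀ v : F.ι 0 → MvPolynomial (Fin n) K,
        (∑ j, v j * g j) = 0 ↔ ∃ w, v = F.ap 0 w) ∧
      F.Exact := by
  intro k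
  induction k with
  | zero =>
    intro _
    refine ⟨trivCx _, fun j => j.elim, fun j => j.elim, ?_, ?_, ?_, ?_⟩
    · haveI : IsEmpty ((trivCx (MvPolynomial (Fin n) K)).ι 0) := inferInstanceAs (IsEmpty PEmpty)
      rw [Set.range_eq_empty, show {j : Fin m | j.val < 0} = (∅ : Set (Fin m)) by ext j; simp,
        Set.image_empty]
    · intro i j k
      exact (j : PEmpty).elim
    · intro v
      constructor
      · intro _
        exact ⟨fun e => (e : PEmpty).elim, funext fun e => (e : PEmpty).elim⟩
      · intro _
        exact Finset.sum_eq_zero fun j _ => (j : PEmpty).elim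
    · intro i v
      constructor
      · intro _
        exact ⟨fun e => (e : PEmpty).elim, funext fun e => (e : PEmpty).elim⟩
      · intro _
        funext j
        exact (j : PEmpty).elim
  | succ k ih =>
    intro hk1
    have hkm : k < m := hk1
    obtain ⟨F, g, hlab, hspan, hFhom, hFe0, hFex⟩ := ih (le_of_lt hkm)
    set i₀ : Fin m := ⟨k, hkm⟩ with hi₀
    have hval : i₀.val = k := rfl
    set mon : MvPolynomial (Fin n) K := monomial (u i₀) 1 with hmon'
    have hudeg : (u i₀).degree = d := by rw [← hd i₀]; rfl
    have hmon : mon.IsHomogeneous d := isHomogeneous_monomial _ hudeg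
    have hghom : ∀ j, (g j).IsHomogeneous d := by
      intro j
      obtain ⟨a, _, hga⟩ := hlab j
      rw [hga]
      exact isHomogeneous_monomial _ (by rw [← hd a]; rfl)
    obtain ⟨s, hs⟩ := hlq i₀
    classical
    set l : List (Fin n) := (Set.Finite.toFinset (Set.toFinite s)).toList with hl
    have hnd : l.Nodup := Finset.nodup_toList _
    have hlset : {y : Fin n | y ∈ l} = s := by
      ext y
      simp [hl, Finset.mem_toList, Set.Finite.mem_toFinset]
    have hsetk : {j : Fin m | j < i₀} = {j : Fin m | j.val < k} := by
      ext j; simp only [Set.mem_setOf_eq, Fin.lt_def, hval]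
    rw [hsetk] at hs
    have hc1 : ∀ q, q * mon ∈ Ideal.span (Set.range g) →
        q ∈ Ideal.span ((fun y => (X y : MvPolynomial (Fin n) K)) '' {y | y ∈ l}) := by
      intro q hq
      rw [hlset, ← hs]
      apply Ideal.mem_colon_span_singleton.2
      rw [← hspan]
      exact hq
    have hc2 : ∀ q, q ∈ Ideal.span ((fun y => (X y : MvPolynomial (Fin n) K)) '' {y | y ∈ l}) →
        q * mon ∈ Ideal.span (Set.range g) := by
      intro q hq
      rw [hlset, ← hs] at hq
      rw [hspan]
      exact Ideal.mem_colon_span_singleton.1 hq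
    obtain ⟨G, g', hlab', hspan', hGhom, hGe0, hGex⟩ :=
      coneStep F g d hghom hFhom hFe0 hFex mon hmon l hnd hc1 hc2
    refine ⟨G, g', ?_, ?_, hGhom, hGe0, hGex⟩
    · intro j
      rcases hlab' j with h | ⟨j', hj'⟩
      · exact ⟨i₀, by omega, h⟩
      · obtain ⟨a, ha, hga⟩ := hlab j'
        exact ⟨a, by omega, hj' ▸ hga⟩
    · have hins : {j : Fin m | j.val < k + 1} = insert i₀ {j : Fin m | j.val < k} := by
        ext j
        simp only [Set.mem_insert_iff, Set.mem_setOf_eq, Fin.ext_iff, hval]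
        omega
      rw [hspan', hspan, hins, Set.image_insert_eq, Ideal.span_insert]
      exact sup_comm _ _

end Main
theorem hasLinearResolution_of_linearQuotients' {K : Type*} [Field K] {n m : ℕ} (d : ℕ)
    (I : Ideal (MvPolynomial (Fin n) K)) (u : Fin m → (Fin n →₀ ℕ))
    (hd : ∀ i, (u i).sum (fun _ e => e) = d)
    (hgen : I = Ideal.span (Set.range fun i => (monomial (u i) (1 : K) :
      MvPolynomial (Fin n) K)))
    (hlq : ∀ i : Fin m, ∃ s : Set (Fin n),
      Submodule.colon
          (Ideal.span ((fun j => (monomial (u j) (1 : K) : MvPolynomial (Fin n) K)) ''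
            {j : Fin m | j < i}))
          (Ideal.span {(monomial (u i) (1 : K) : MvPolynomial (Fin n) K)})
        = Ideal.span ((fun x => (X x : MvPolynomial (Fin n) K)) '' s)) :
    ∃ (r : ℕ → ℕ) (g : Fin (r 0) → MvPolynomial (Fin n) K)
      (M : (i : ℕ) → Fin (r i) → Fin (r (i + 1)) → MvPolynomial (Fin n) K),
      (∀ j, (g j).IsHomogeneous d) ∧
      I = Ideal.span (Set.range g) ∧
      (∀ i j k, (M i j k).IsHomogeneous 1) ∧
      (∀ v : Fin (r 0) → MvPolynomial (Fin n) K,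
        (∑ j, v j * g j) = 0 ↔
          ∃ w : Fin (r 1) → MvPolynomial (Fin n) K, v = fun j => ∑ k, M 0 j k * w k) ∧
      (∀ (i : ℕ) (v : Fin (r (i + 1)) → MvPolynomial (Fin n) K),
        ((fun j => ∑ k, M i j k * v k) = fun _ => 0) ↔
          ∃ w : Fin (r (i + 2)) → MvPolynomial (Fin n) K,
            v = fun k => ∑ l, M (i + 1) k l * w l) := by
  obtain ⟨F, g, hlab, hspan, hFhom, hFe0, hFex⟩ := mainInduction (K := K) d u hd hlq m le_rfl
  have hghom : ∀ j, (g j).IsHomogeneous d := by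
    intro j
    obtain ⟨a, _, hga⟩ := hlab j
    rw [hga]
    exact isHomogeneous_monomial _ (by rw [← hd a]; rfl)
  have hIspan : I = Ideal.span (Set.range g) := by
    rw [hgen, hspan]
    have huniv : {j : Fin m | j.val < m} = Set.univ := by ext j; simp [j.isLt]
    rw [huniv, Set.image_univ]
  let e : ∀ i, F.ι i ≃ Fin (Fintype.card (F.ι i)) := fun i => Fintype.equivFin _
  refine ⟨fun i => Fintype.card (F.ι i), fun j => g ((e 0).symm j),
    fun i j k => F.M i ((e i).symm j) ((e (i + 1)).symm k),
    fun j => hghom _, ?_, fun i j k => hFhom i _ _, ?_, ?_⟩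
  · rw [hIspan]
    congr 1
    exact (Function.Surjective.range_comp ((e 0).symm.surjective) g).symm
  · intro v
    have h1 : (∑ j, v j * g ((e 0).symm j)) = ∑ j', v (e 0 j') * g j' :=
      (Fintype.sum_equiv (e 0) (fun j' => v (e 0 j') * g j')
        (fun j => v j * g ((e 0).symm j)) (fun j' => by simp)).symm
    rw [h1]
    exact (hFe0 _).trans (transport_iff F 0 (e 0) (e 1) v)
  · intro i v
    have hL : (fun j : Fin (Fintype.card (F.ι i)) =>
        ∑ k, F.M i ((e i).symm j) ((e (i + 1)).symm k) * v k) =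
        (F.ap i (fun k' => v (e (i + 1) k'))) ∘ (e i).symm := by
      funext j
      show _ = F.ap i (fun k' => v (e (i + 1) k')) ((e i).symm j)
      simp only [MatCx.ap]
      exact Fintype.sum_equiv (e (i + 1)).symm _ _ (fun k => by simp)
    have hiff : ((F.ap i (fun k' => v (e (i + 1) k'))) ∘ (e i).symm = fun _ => 0) ↔
        F.ap i (fun k' => v (e (i + 1) k')) = 0 := by
      constructor
      · intro h
        funext j'
        have h2 := congrFun h (e i j')
        simpa using h2
      · intro h
        rw [h]
        funext j
        simp
    rw [hL, hiff]
    exact (hFex i _).trans (transport_iff F (i + 1) (e (i + 1)) (e (i + 2)) v)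

end LinearResolutionAux

/-- An equigenerated monomial ideal (all minimal generators of degree `d`) with linear
quotients has a `d`-linear resolution. -/
theorem hasLinearResolution_of_linearQuotients {K : Type*} [Field K] {n m : ℕ} (d : ℕ)
    (I : Ideal (MvPolynomial (Fin n) K)) (u : Fin m → (Fin n →₀ ℕ))
    (hd : ∀ i, (u i).sum (fun _ e => e) = d)
    (hgen : I = Ideal.span (Set.range fun i => (monomial (u i) (1 : K) :
      MvPolynomial (Fin n) K)))
    (hmin : ∀ i j : Fin m, u i ≤ u j → i = j)
    (hlq : ∀ i : Fin m, ∃ s : Set (Fin n),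
      Submodule.colon
          (Ideal.span ((fun j => (monomial (u j) (1 : K) : MvPolynomial (Fin n) K)) ''
            {j : Fin m | j < i}))
          (Ideal.span {(monomial (u i) (1 : K) : MvPolynomial (Fin n) K)})
        = Ideal.span ((fun x => (X x : MvPolynomial (Fin n) K)) '' s)) :
    HasLinearResolution I d := by
  exact hasLinearResolution_of_linearQuotients' d I u hd hgen hlq
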